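/- Let G be a graph, let B_1, ..., B_{h−1} be subgraphs of G, and let x_1, ..., x_h be vertices, forming a banana path: each B_i is an induced banana in G with ends x_i, x_{i+1}, the bananas are pairwise orthogonal, and the x_i pairwise have distance at least n ≥ 3. Suppose additionally each banana has thickness n − 1 and each of its constituent paths has length at least n − 1. Then the union of the B_i is an induced subgraph of G isomorphic to a graph obtained from a path with h vertices by replacing each edge by a banana of thickness n − 1 in which every path has length at least n − 1. -/

import Mathlib

namespace SimpleGraph
namespace Walk
variable {V : Type} {G : SimpleGraph V} {S : Set V}

def liftInduce : ∀ {u v : V} (p : G.Walk u v), (∀ w ∈ p.support, w ∈ S) →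
    ∀ (hu : u ∈ S) (hv : v ∈ S), (G.induce S).Walk ⟨u, hu⟩ ⟨v, hv⟩
  | _, _, nil, _, _, _ => nil
  | _, _, cons h p, hS, hu, hv =>
    cons (by exact h) (liftInduce p (fun w hw => hS w (by simp [hw])) (hS _ (by simp)) hv)

lemma support_liftInduce : ∀ {u v : V} (p : G.Walk u v) (hS : ∀ w ∈ p.support, w ∈ S)
    (hu : u ∈ S) (hv : v ∈ S),
    (liftInduce p hS hu hv).support.map Subtype.val = p.support
  | _, _, nil, _, _, _ => rfl
  | _, _, cons h p, hS, hu, hv => by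
    exact congrArg (List.cons _) (support_liftInduce p _ _ hv)

lemma length_liftInduce : ∀ {u v : V} (p : G.Walk u v) (hS : ∀ w ∈ p.support, w ∈ S)
    (hu : u ∈ S) (hv : v ∈ S), (liftInduce p hS hu hv).length = p.length
  | _, _, nil, _, _, _ => rfl
  | _, _, cons h p, hS, hu, hv => by
    exact congrArg (· + 1) (length_liftInduce p _ _ hv)

lemma edges_liftInduce : ∀ {u v : V} (p : G.Walk u v) (hS : ∀ w ∈ p.support, w ∈ S)
    (hu : u ∈ S) (hv : v ∈ S),
    (liftInduce p hS hu hv).edges.map (Sym2.map Subtype.val) = p.edges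
  | _, _, nil, _, _, _ => rfl
  | _, _, cons h p, hS, hu, hv => by
    exact congrArg (List.cons _) (edges_liftInduce p _ _ hv)

lemma mem_support_liftInduce {u v : V} (p : G.Walk u v) (hS : ∀ w ∈ p.support, w ∈ S)
    (hu : u ∈ S) (hv : v ∈ S) (w : S) :
    w ∈ (liftInduce p hS hu hv).support ↔ (w : V) ∈ p.support := by
  rw [← support_liftInduce p hS hu hv, List.mem_map]
  constructor
  · rintro hw; exact ⟨w, hw, rfl⟩
  · rintro ⟨a, ha, hav⟩; rwa [Subtype.ext hav] at ha

lemma isPath_liftInduce {u v : V} (p : G.Walk u v) (hS : ∀ w ∈ p.support, w ∈ S)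
    (hu : u ∈ S) (hv : v ∈ S) (hp : p.IsPath) : (liftInduce p hS hu hv).IsPath := by
  rw [isPath_def] at hp ⊢
  have := support_liftInduce p hS hu hv ▸ hp
  exact this.of_map

end Walk
end SimpleGraph
/-- `H` is (exactly) a graph obtained from a path with `m + 1` vertices `y 0, …, y m` by
replacing each edge by a banana of thickness `t` each of whose constituent paths has length
at least `ℓ`: there are internally disjoint paths realising the bananas, distinct bananas
meet only when consecutive and then only in their common end, and every vertex and every
edge of `H` lies on one of the paths. -/
def BananaPathShape {W : Type} (H : SimpleGraph W) (m t ℓ : ℕ) : Prop :=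
  ∃ (y : Fin (m + 1) → W)
    (P : (i : Fin m) → Fin t → H.Walk (y i.castSucc) (y i.succ)),
    Function.Injective y ∧
    (∀ i j, (P i j).IsPath ∧ ℓ ≤ (P i j).length) ∧
    (∀ i j j', j ≠ j' → ∀ v, v ∈ (P i j).support → v ∈ (P i j').support →
      v = y i.castSucc ∨ v = y i.succ) ∧
    (∀ i i', i ≠ i' → ∀ v, (∃ j, v ∈ (P i j).support) → (∃ j, v ∈ (P i' j).support) →
      (i.succ = i'.castSucc ∧ v = y i.succ) ∨ (i'.succ = i.castSucc ∧ v = y i'.succ)) ∧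
    (∀ w : W, ∃ i j, w ∈ (P i j).support) ∧
    (∀ u v, H.Adj u v → ∃ i j, s(u, v) ∈ (P i j).edges)


/-- the union of a banana path — consecutive pairwise-orthogonal induced
bananas `B i` of thickness `n - 1`, with constituent paths of length at least `n - 1`,
joining vertices `x 0, …, x m` that pairwise have distance at least `n ≥ 3` — is an induced
subgraph of `G` isomorphic to a graph obtained from a path with `m + 1` vertices by
replacing each edge by a banana of thickness `n - 1` in which every path has length at
least `n - 1`. -/
theorem stmt_17 {V : Type} (G : SimpleGraph V) (m n : ℕ) (hm : 1 ≤ m) (hn : 3 ≤ n)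
    (x : Fin (m + 1) → V)
    (hx : ∀ a b, a ≠ b → n ≤ G.dist (x a) (x b))
    (P : (i : Fin m) → Fin (n - 1) → G.Walk (x i.castSucc) (x i.succ))
    (hpath : ∀ i j, (P i j).IsPath ∧ n - 1 ≤ (P i j).length)
    (hintdisj : ∀ i j j', j ≠ j' → ∀ v, v ∈ (P i j).support → v ∈ (P i j').support →
      v = x i.castSucc ∨ v = x i.succ)
    (hinduced : ∀ i, ∀ u v, (∃ j, u ∈ (P i j).support) → (∃ j, v ∈ (P i j).support) →
      G.Adj u v → ∃ j, s(u, v) ∈ (P i j).edges)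
    (horth₁ : ∀ i i', i ≠ i' → ∀ v, (∃ j, v ∈ (P i j).support) →
      (∃ j, v ∈ (P i' j).support) →
      (v = x i.castSucc ∨ v = x i.succ) ∧ (v = x i'.castSucc ∨ v = x i'.succ))
    (horth₂ : ∀ i i', i ≠ i' → ∀ v w, (∃ j, v ∈ (P i j).support) →
      (∃ j, v ∈ (P i' j).support) → (∃ j, w ∈ (P i j).support) →
      (∃ j, w ∈ (P i' j).support) → v = w)
    (horth₃ : ∀ i i', i ≠ i' → ∀ u v, (∃ j, u ∈ (P i j).support) →
      (∃ j, v ∈ (P i' j).support) → G.Adj u v →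
      ∃ w, (∃ j, w ∈ (P i j).support) ∧ (∃ j, w ∈ (P i' j).support) ∧
        (w = x i.castSucc ∨ w = x i.succ) ∧ (w = x i'.castSucc ∨ w = x i'.succ) ∧
        (u = w ∨ v = w)) :
    (∀ u v, (∃ i j, u ∈ (P i j).support) → (∃ i j, v ∈ (P i j).support) →
      G.Adj u v → ∃ i j, s(u, v) ∈ (P i j).edges) ∧
    BananaPathShape (G.induce {w | ∃ i j, w ∈ (P i j).support}) m (n - 1) (n - 1) := by
  have hxinj : Function.Injective x := by
    intro a b hab
    by_contra hne
    have h1 := hx a b hne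
    rw [hab, SimpleGraph.dist_self] at h1
    omega
  have part1 : ∀ u v, (∃ i j, u ∈ (P i j).support) → (∃ i j, v ∈ (P i j).support) →
      G.Adj u v → ∃ i j, s(u, v) ∈ (P i j).edges := by
    rintro u v ⟨i, j, hu⟩ ⟨i', j', hv⟩ hadj
    by_cases hii : i = i'
    · subst hii
      obtain ⟨j₀, h⟩ := hinduced i u v ⟨j, hu⟩ ⟨j', hv⟩ hadj
      exact ⟨i, j₀, h⟩
    · obtain ⟨w, hwi, hwi', _, _, hw⟩ := horth₃ i i' hii u v ⟨j, hu⟩ ⟨j', hv⟩ hadj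
      rcases hw with rfl | rfl
      · obtain ⟨j₀, h⟩ := hinduced i' u v hwi' ⟨j', hv⟩ hadj
        exact ⟨i', j₀, h⟩
      · obtain ⟨j₀, h⟩ := hinduced i u v ⟨j, hu⟩ hwi hadj
        exact ⟨i, j₀, h⟩
  refine ⟨part1, ?_⟩
  have hxS : ∀ a : Fin (m + 1), ∃ i j, x a ∈ (P i j).support := by
    intro a
    by_cases h : (a : ℕ) < m
    · refine ⟨⟨a, h⟩, ⟨0, by omega⟩, ?_⟩
      have he : (⟨(a : ℕ), h⟩ : Fin m).castSucc = a := by ext; simp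
      have hv : x a = x (⟨(a : ℕ), h⟩ : Fin m).castSucc := congrArg x he.symm
      rw [hv]
      exact SimpleGraph.Walk.start_mem_support _
    · refine ⟨⟨m - 1, by omega⟩, ⟨0, by omega⟩, ?_⟩
      have he : (⟨m - 1, by omega⟩ : Fin m).succ = a := by
        ext
        simp only [Fin.val_succ]
        omega
      have hv : x a = x (⟨m - 1, by omega⟩ : Fin m).succ := congrArg x he.symm
      rw [hv]
      exact SimpleGraph.Walk.end_mem_support _
  set S : Set V := {w | ∃ i j, w ∈ (P i j).support} with hS
  refine ⟨fun a => ⟨x a, hxS a⟩,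
    fun i j => (P i j).liftInduce (S := S) (fun w hw => show ∃ a b, w ∈ (P a b).support from ⟨i, j, hw⟩) (hxS _) (hxS _),
    ?_, ?_, ?_, ?_, ?_, ?_⟩
  · intro a b hab
    exact hxinj (Subtype.ext_iff.1 hab)
  · intro i j
    refine ⟨SimpleGraph.Walk.isPath_liftInduce _ _ _ _ (hpath i j).1, ?_⟩
    rw [SimpleGraph.Walk.length_liftInduce]
    exact (hpath i j).2
  · intro i j j' hjj v hvj hvj'
    rw [SimpleGraph.Walk.mem_support_liftInduce] at hvj hvj'
    rcases hintdisj i j j' hjj v.val hvj hvj' with h | h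
    · exact Or.inl (Subtype.ext h)
    · exact Or.inr (Subtype.ext h)
  · rintro i i' hii v ⟨j, hj⟩ ⟨j', hj'⟩
    rw [SimpleGraph.Walk.mem_support_liftInduce] at hj hj'
    obtain ⟨h1, h2⟩ := horth₁ i i' hii v.val ⟨j, hj⟩ ⟨j', hj'⟩
    rcases h1 with h1 | h1 <;> rcases h2 with h2 | h2
    · exact absurd (Fin.castSucc_injective m (hxinj (h1 ▸ h2))) hii
    · exact Or.inr ⟨(hxinj (h1 ▸ h2)).symm, Subtype.ext h2⟩
    · exact Or.inl ⟨hxinj (h1 ▸ h2), Subtype.ext h1⟩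
    · exact absurd (Fin.succ_injective m (hxinj (h1 ▸ h2))) hii
  · intro w
    obtain ⟨i, j, h⟩ := w.2
    exact ⟨i, j, (SimpleGraph.Walk.mem_support_liftInduce _ _ _ _ _).2 h⟩
  · intro u v huv
    have hadj : G.Adj u.val v.val := huv
    obtain ⟨i, j, he⟩ := part1 u.val v.val u.2 v.2 hadj
    rw [← SimpleGraph.Walk.edges_liftInduce (P i j) (fun w hw => show ∃ a b, w ∈ (P a b).support from ⟨i, j, hw⟩)
      (hxS _) (hxS _)] at he
    obtain ⟨e, he1, he2⟩ := List.mem_map.1 he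
    have heq : e = s(u, v) :=
      Sym2.map.injective Subtype.val_injective (he2.trans (by simp))
    exact ⟨i, j, heq ▸ he1⟩
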